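/- Let x ∈ ℝ^{np} be k-block-sparse, let y = Ax + w with ‖A^T w‖_{b∞} ≤ μ, and let x̂ be a minimizer of ‖z‖_{b1} over all z with ‖A^T(y − Az)‖_{b∞} ≤ μ (the Block-Sparse Dantzig selector). If ω_{b∞}(A^T A,2k) > 0, then ‖x̂ − x‖_{b∞} ≤ 2μ/ω_{b∞}(A^T A,2k). -/

import Mathlib

open MeasureTheory ProbabilityTheory Finset Matrix

/-- Euclidean norm of a finitely-indexed real vector. -/
noncomputable def vnorm {ι : Type*} [Fintype ι] (v : ι → ℝ) : ℝ :=
  Real.sqrt (∑ i, (v i) ^ 2)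

/-- Euclidean norm of the `i`-th block of `x ∈ ℝ^{np}` (blocks indexed by `Fin p`). -/
noncomputable def bnorm {n p : ℕ} (x : Fin p × Fin n → ℝ) (i : Fin p) : ℝ :=
  vnorm (fun j => x (i, j))

/-- Block-ℓ1 norm: `‖x‖_{b1} = ∑ i, ‖x_i‖₂`. -/
noncomputable def bl1 {n p : ℕ} (x : Fin p × Fin n → ℝ) : ℝ :=
  ∑ i, bnorm x i

/-- Block-ℓ∞ norm: `‖x‖_{b∞} = max_i ‖x_i‖₂`. -/
noncomputable def blinf {n p : ℕ} (x : Fin p × Fin n → ℝ) : ℝ :=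
  ⨆ i, bnorm x i

open scoped Classical in
/-- Block support: indices of nonzero blocks. -/
noncomputable def bsupp {n p : ℕ} (x : Fin p × Fin n → ℝ) : Finset (Fin p) :=
  Finset.univ.filter (fun i => ∃ j, x (i, j) ≠ 0)

/-- `ω₂(A,s) = inf { ‖Az‖₂ / ‖z‖_{b∞} : z ≠ 0, ‖z‖_{b1} ≤ s ‖z‖_{b∞} }`. -/
noncomputable def omega2 {m n p : ℕ} (A : Matrix (Fin m) (Fin p × Fin n) ℝ) (s : ℝ) : ℝ :=
  sInf {r | ∃ z : Fin p × Fin n → ℝ, z ≠ 0 ∧ bl1 z ≤ s * blinf z ∧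
    r = vnorm (A.mulVec z) / blinf z}

/-- `ω_{b∞}(AᵀA,s) = inf { ‖AᵀAz‖_{b∞} / ‖z‖_{b∞} : z ≠ 0, ‖z‖_{b1} ≤ s ‖z‖_{b∞} }`. -/
noncomputable def omegaBInf {m n p : ℕ} (A : Matrix (Fin m) (Fin p × Fin n) ℝ) (s : ℝ) : ℝ :=
  sInf {r | ∃ z : Fin p × Fin n → ℝ, z ≠ 0 ∧ bl1 z ≤ s * blinf z ∧
    r = blinf ((Aᵀ * A).mulVec z) / blinf z}

/-- Block ℓ1-constrained minimal singular value
`ρ_s(A) = inf { ‖Az‖₂ / ‖z‖₂ : z ≠ 0, ‖z‖_{b1}² ≤ s ‖z‖₂² }`. -/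
noncomputable def rhoCMSV {m n p : ℕ} (A : Matrix (Fin m) (Fin p × Fin n) ℝ) (s : ℝ) : ℝ :=
  sInf {r | ∃ z : Fin p × Fin n → ℝ, z ≠ 0 ∧ (bl1 z) ^ 2 ≤ s * (vnorm z) ^ 2 ∧
    r = vnorm (A.mulVec z) / vnorm z}

/-- Spectral norm (largest singular value) of a real matrix, as the ℓ2→ℓ2 operator norm. -/
noncomputable def specNorm {ι κ : Type*} [Fintype ι] [Fintype κ] (M : Matrix ι κ ℝ) : ℝ :=
  sSup {r | ∃ v : κ → ℝ, vnorm v ≤ 1 ∧ r = vnorm (M.mulVec v)}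

/-- The `j`-th column block (of `n` columns) of a matrix with `np` columns. -/
def colBlock {ι : Type*} {n p : ℕ} (Q : Matrix ι (Fin p × Fin n) ℝ) (j : Fin p) :
    Matrix ι (Fin n) ℝ := Matrix.of fun r c => Q r (j, c)

/-- The `l`-th row block (of `n` rows) of a matrix with `np` rows. -/
def rowBlock {κ : Type*} {n p : ℕ} (P : Matrix (Fin p × Fin n) κ ℝ) (l : Fin p) :
    Matrix (Fin n) κ ℝ := Matrix.of fun r c => P (l, r) c

/-- `δ_{ij} Iₙ`. -/
def deltaId (n : ℕ) {p : ℕ} (i j : Fin p) : Matrix (Fin n) (Fin n) ℝ :=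
  if i = j then 1 else 0

/-- Orlicz ψ₂ norm of a scalar random variable. -/
noncomputable def psi2 {Ω : Type*} [MeasurableSpace Ω] (μ : Measure Ω) (Y : Ω → ℝ) : ℝ :=
  sInf {t | 0 < t ∧ ∫ ω, Real.exp ((Y ω) ^ 2 / t ^ 2) ∂μ ≤ 2}

lemma vnorm_eq {ι : Type*} [Fintype ι] (v : ι → ℝ) :
    vnorm v = ‖(WithLp.toLp 2 v : EuclideanSpace ℝ ι)‖ := by
  rw [EuclideanSpace.norm_eq]
  simp [vnorm, Real.norm_eq_abs, sq_abs]

lemma vnorm_nonneg {ι : Type*} [Fintype ι] (v : ι → ℝ) : 0 ≤ vnorm v :=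
  Real.sqrt_nonneg _

lemma vnorm_add_le {ι : Type*} [Fintype ι] (v w : ι → ℝ) :
    vnorm (v + w) ≤ vnorm v + vnorm w := by
  rw [vnorm_eq, vnorm_eq, vnorm_eq]
  exact norm_add_le (WithLp.toLp 2 v : EuclideanSpace ℝ ι) (WithLp.toLp 2 w : EuclideanSpace ℝ ι)

lemma bnorm_nonneg {n p : ℕ} (x : Fin p × Fin n → ℝ) (i : Fin p) : 0 ≤ bnorm x i :=
  vnorm_nonneg _

lemma bnorm_add_le {n p : ℕ} (x y : Fin p × Fin n → ℝ) (i : Fin p) :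
    bnorm (x + y) i ≤ bnorm x i + bnorm y i :=
  vnorm_add_le (fun j => x (i, j)) (fun j => y (i, j))

lemma blinf_nonneg {n p : ℕ} (x : Fin p × Fin n → ℝ) : 0 ≤ blinf x :=
  Real.iSup_nonneg (fun i => bnorm_nonneg x i)

lemma bnorm_le_blinf {n p : ℕ} (x : Fin p × Fin n → ℝ) (i : Fin p) :
    bnorm x i ≤ blinf x :=
  le_ciSup (Set.Finite.bddAbove (Set.finite_range _)) i

lemma blinf_le {n p : ℕ} (x : Fin p × Fin n → ℝ) {c : ℝ} (hc : 0 ≤ c)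
    (h : ∀ i, bnorm x i ≤ c) : blinf x ≤ c :=
  Real.iSup_le h hc

lemma blinf_add_le {n p : ℕ} (x y : Fin p × Fin n → ℝ) :
    blinf (x + y) ≤ blinf x + blinf y :=
  blinf_le _ (add_nonneg (blinf_nonneg x) (blinf_nonneg y)) fun i =>
    (bnorm_add_le x y i).trans (add_le_add (bnorm_le_blinf x i) (bnorm_le_blinf y i))

lemma blinf_pos {n p : ℕ} {x : Fin p × Fin n → ℝ} (hx : x ≠ 0) : 0 < blinf x := by
  obtain ⟨ij, hij⟩ : ∃ ij, x ij ≠ 0 := by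
    by_contra hc; push_neg at hc; exact hx (funext hc)
  have h1 : 0 < bnorm x ij.1 := by
    rw [bnorm, vnorm, Real.sqrt_pos]
    have : (0:ℝ) < (x (ij.1, ij.2)) ^ 2 := by positivity
    refine lt_of_lt_of_le this ?_
    exact Finset.single_le_sum (f := fun j => (x (ij.1, j))^2)
      (fun j _ => sq_nonneg _) (Finset.mem_univ ij.2)
  exact lt_of_lt_of_le h1 (bnorm_le_blinf x ij.1)
lemma bnorm_neg {n p : ℕ} (x : Fin p × Fin n → ℝ) (i : Fin p) :
    bnorm (-x) i = bnorm x i := by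
  simp [bnorm, vnorm, neg_sq]

lemma blinf_neg {n p : ℕ} (x : Fin p × Fin n → ℝ) : blinf (-x) = blinf x := by
  unfold blinf
  exact iSup_congr (bnorm_neg x)

/-- Theorem 1, BS-DS: `‖x̂ - x‖_{b∞} ≤ 2μ / ω_{b∞}(AᵀA, 2k)`. -/
theorem stmt6 {m n p k : ℕ} (A : Matrix (Fin m) (Fin p × Fin n) ℝ)
    (x : Fin p × Fin n → ℝ) (w y : Fin m → ℝ) (xhat : Fin p × Fin n → ℝ) (μ : ℝ)
    (hsparse : (bsupp x).card ≤ k)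
    (hy : y = A.mulVec x + w)
    (hw : blinf (Aᵀ.mulVec w) ≤ μ)
    (hfeas : blinf (Aᵀ.mulVec (y - A.mulVec xhat)) ≤ μ)
    (hmin : ∀ z : Fin p × Fin n → ℝ,
      blinf (Aᵀ.mulVec (y - A.mulVec z)) ≤ μ → bl1 xhat ≤ bl1 z)
    (hω : 0 < omegaBInf A (2 * k)) :
    blinf (xhat - x) ≤ 2 * μ / omegaBInf A (2 * k) := by
  classical
  set S : Fin p × Fin n → ℝ := xhat - x with hhdef
  have hμ0 : 0 ≤ μ := le_trans (blinf_nonneg _) hw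
  by_cases hz : S = 0
  · have h0 : blinf S = 0 := by
      rw [hz]
      refine le_antisymm (blinf_le _ le_rfl fun i => ?_) (blinf_nonneg _)
      simp [bnorm, vnorm]
    rw [h0]
    exact div_nonneg (by linarith) hω.le
  · have hxfeas : blinf (Aᵀ.mulVec (y - A.mulVec x)) ≤ μ := by
      rw [hy]
      simpa using hw
    have hl1 : bl1 xhat ≤ bl1 x := hmin x hxfeas
    set T := bsupp x with hT
    have hoff : ∀ i ∉ T, ∀ j, x (i, j) = 0 := by
      intro i hi j
      by_contra hne
      apply hi
      simp only [hT, bsupp, Finset.mem_filter, Finset.mem_univ, true_and]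
      exact ⟨j, hne⟩
    have hbx0 : ∀ i ∉ T, bnorm x i = 0 := fun i hi => by
      simp [bnorm, vnorm, hoff i hi]
    have hbxh : ∀ i ∉ T, bnorm xhat i = bnorm S i := by
      intro i hi
      have heq : (fun j => S (i, j)) = fun j => xhat (i, j) := by
        funext j
        simp [hhdef, hoff i hi]
      simp [bnorm, heq]
    have hrev : ∀ i, bnorm x i - bnorm S i ≤ bnorm xhat i := by
      intro i
      have hxe : x = xhat + (-S) := by
        rw [hhdef]; ring
      have hb := bnorm_add_le xhat (-S) i
      rw [bnorm_neg] at hb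
      calc bnorm x i - bnorm S i = bnorm (xhat + (-S)) i - bnorm S i := by rw [← hxe]
        _ ≤ bnorm xhat i := by linarith
    have key : ∑ i ∈ Tᶜ, bnorm S i ≤ ∑ i ∈ T, bnorm S i := by
      have h1 : bl1 x = ∑ i ∈ T, bnorm x i := by
        rw [bl1, ← Finset.sum_add_sum_compl T]
        have hc0 : ∑ i ∈ Tᶜ, bnorm x i = 0 :=
          Finset.sum_eq_zero fun i hi => hbx0 i (Finset.mem_compl.mp hi)
        rw [hc0, add_zero]
      have h2 : bl1 xhat = ∑ i ∈ T, bnorm xhat i + ∑ i ∈ Tᶜ, bnorm S i := by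
        rw [bl1, ← Finset.sum_add_sum_compl T]
        congr 1
        exact Finset.sum_congr rfl fun i hi => hbxh i (Finset.mem_compl.mp hi)
      have h3 : ∑ i ∈ T, bnorm x i - ∑ i ∈ T, bnorm S i ≤ ∑ i ∈ T, bnorm xhat i := by
        rw [← Finset.sum_sub_distrib]
        exact Finset.sum_le_sum fun i _ => hrev i
      linarith
    have hcone : bl1 S ≤ (2 * (k : ℝ)) * blinf S := by
      have hsum : ∑ i ∈ T, bnorm S i ≤ (T.card : ℝ) * blinf S := by
        calc ∑ i ∈ T, bnorm S i ≤ ∑ _i ∈ T, blinf S :=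
              Finset.sum_le_sum fun i _ => bnorm_le_blinf S i
          _ = (T.card : ℝ) * blinf S := by rw [Finset.sum_const, nsmul_eq_mul]
      have hcard : (T.card : ℝ) ≤ (k : ℝ) := Nat.cast_le.mpr hsparse
      have hspl : bl1 S = ∑ i ∈ T, bnorm S i + ∑ i ∈ Tᶜ, bnorm S i :=
        (Finset.sum_add_sum_compl T _).symm
      nlinarith [blinf_nonneg S]
    have hAA : blinf ((Aᵀ * A).mulVec S) ≤ 2 * μ := by
      have e1 : (Aᵀ * A).mulVec S =
          Aᵀ.mulVec (y - A.mulVec x) + (-(Aᵀ.mulVec (y - A.mulVec xhat))) := by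
        rw [← Matrix.mulVec_mulVec, ← Matrix.mulVec_neg, ← Matrix.mulVec_add]
        congr 1
        rw [hhdef, Matrix.mulVec_sub]
        ring
      rw [e1]
      refine (blinf_add_le _ _).trans ?_
      rw [blinf_neg]
      linarith
    have hpos : 0 < blinf S := blinf_pos hz
    have hset : omegaBInf A (2 * k) ≤ blinf ((Aᵀ * A).mulVec S) / blinf S := by
      apply csInf_le
      · refine ⟨0, fun r hr => ?_⟩
        obtain ⟨z, hz0, hzc, rfl⟩ := hr
        exact div_nonneg (blinf_nonneg _) (blinf_nonneg _)
      · exact ⟨S, hz, hcone, rfl⟩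
    rw [le_div_iff₀ hω]
    have h4 : omegaBInf A (2 * (k : ℝ)) * blinf S ≤ blinf ((Aᵀ * A).mulVec S) :=
      (le_div_iff₀ hpos).mp hset
    nlinarith
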